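/- arXiv:2109.04680 — 4 statements merged into one kernel-verified Lean document; each statement's English description precedes it below -/
import Mathlib

section
/- For every λ > 0 with λ ≠ μ and every μ > 0, the Green functions satisfy ∫_{ℝ²} G_λ(x) G_μ(x) dx = (ln λ − ln μ) / (4π(λ − μ)). -/
open MeasureTheory

noncomputable section

/-- ℝ², i.e. two-dimensional Euclidean space. -/
abbrev E2 := EuclideanSpace ℝ (Fin 2)

/-- The Green function `G_λ` of `-Δ + λ` on `ℝ²`, defined via the heat-kernel formula
`G_λ(x) = ∫₀^∞ (4πt)⁻¹ exp(-‖x‖²/(4t) - λt) dt`. -/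
noncomputable def greenFn (l : ℝ) (x : E2) : ℝ :=
  ∫ t in Set.Ioi (0 : ℝ), (4 * Real.pi * t)⁻¹ * Real.exp (-‖x‖ ^ 2 / (4 * t) - l * t)

namespace GreenAux

open Set Real Filter Topology

lemma expInt {a : ℝ} (ha : 0 < a) : ∫ r in Ioi (0:ℝ), Real.exp (-(a*r)) = a⁻¹ := by
  have h := integral_Ioi_of_hasDerivAt_of_nonneg' (a := 0) (g := fun r => -a⁻¹ * Real.exp (-(a*r)))
    (g' := fun r => Real.exp (-(a*r))) (l := 0) ?_ (fun x _ => (Real.exp_pos _).le) ?_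
  · simpa using h
  · intro x _
    have : HasDerivAt (fun r : ℝ => Real.exp (-(a*r))) (Real.exp (-(a*x)) * (-a)) x := by
      have h1 : HasDerivAt (fun r : ℝ => -(a*r)) (-a) x := by
        exact (((hasDerivAt_id x).const_mul a).neg).congr_deriv (by simp)
      exact (Real.hasDerivAt_exp _).comp x h1
    have := this.const_mul (-a⁻¹)
    refine this.congr_deriv ?_
    field_simp [ha.ne']
  · rw [show (0:ℝ) = -a⁻¹ * 0 by ring]
    apply Tendsto.const_mul
    apply Real.tendsto_exp_atBot.comp
    have : Tendsto (fun r : ℝ => -(a*r)) atTop atBot := by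
      apply tendsto_neg_atBot_iff.mpr
      exact (tendsto_const_mul_atTop_of_pos ha).2 tendsto_id
    exact this

lemma expIntL {a : ℝ} (ha : 0 < a) :
    ∫⁻ r in Ioi (0:ℝ), ENNReal.ofReal (Real.exp (-(a*r))) = ENNReal.ofReal a⁻¹ := by
  rw [← ofReal_integral_eq_lintegral_ofReal, expInt ha]
  · have h := exp_neg_integrableOn_Ioi 0 ha
    simp only [neg_mul] at h
    exact h
  · exact Filter.Eventually.of_forall fun x => (Real.exp_pos _).le

lemma fracIntL {l m : ℝ} (hl : 0 < l) (hm : 0 < m) (hne : l ≠ m) :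
    ∫⁻ r in Ioi (0:ℝ), ENNReal.ofReal (((l+r)*(m+r))⁻¹)
      = ENNReal.ofReal ((Real.log l - Real.log m)/(l-m)) := by
  have hml : m - l ≠ 0 := sub_ne_zero.mpr (Ne.symm hne)
  have hderiv : ∀ x ∈ Ici (0:ℝ), HasDerivAt
      (fun r => (Real.log (l+r) - Real.log (m+r)) / (m-l)) (((l+x)*(m+x))⁻¹) x := by
    intro x hx
    have hx0 : (0:ℝ) ≤ x := hx
    have hlx : 0 < l + x := by positivity
    have hmx : 0 < m + x := by positivity
    have d1 : HasDerivAt (fun r : ℝ => Real.log (l+r)) (l+x)⁻¹ x := by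
      have := (Real.hasDerivAt_log hlx.ne').comp x ((hasDerivAt_id x).const_add l)
      simpa [Function.comp_def] using this
    have d2 : HasDerivAt (fun r : ℝ => Real.log (m+r)) (m+x)⁻¹ x := by
      have := (Real.hasDerivAt_log hmx.ne').comp x ((hasDerivAt_id x).const_add m)
      simpa [Function.comp_def] using this
    have := (d1.sub d2).div_const (m-l)
    refine this.congr_deriv ?_
    field_simp [hlx.ne', hmx.ne', hml]
    ring
  have hpos : ∀ x ∈ Ioi (0:ℝ), 0 ≤ ((l+x)*(m+x))⁻¹ := by
    intro x hx
    have hx0 : (0:ℝ) < x := hx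
    have hlx : 0 < l + x := by positivity
    have hmx : 0 < m + x := by positivity
    positivity
  have htends : Tendsto (fun r : ℝ => (Real.log (l+r) - Real.log (m+r)) / (m-l)) atTop (𝓝 0) := by
    have h1 : Tendsto (fun r : ℝ => (l-m)/(m+r) + 1) atTop (𝓝 1) := by
      have := Tendsto.div_atTop (tendsto_const_nhds (x := l-m))
        (tendsto_atTop_add_const_left atTop m tendsto_id)
      simpa using this.add_const 1
    have h2 : Tendsto (fun r : ℝ => (l+r)/(m+r)) atTop (𝓝 1) := by
      apply h1.congr'
      filter_upwards [Ioi_mem_atTop (0:ℝ)] with r hr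
      have hr' : (0:ℝ) < r := hr
      have hmr : m + r ≠ 0 := by positivity
      field_simp
      ring
    have h3 : Tendsto (fun r : ℝ => Real.log ((l+r)/(m+r))) atTop (𝓝 0) := by
      have := (Real.continuousAt_log one_ne_zero).tendsto.comp h2
      simpa [Function.comp_def] using this
    have : Tendsto (fun r : ℝ => (Real.log (l+r) - Real.log (m+r)) / (m-l)) atTop (𝓝 (0/(m-l))) := by
      apply Tendsto.div_const
      apply h3.congr'
      filter_upwards [Ioi_mem_atTop (0:ℝ)] with r hr
      have hr' : (0:ℝ) < r := hr
      have hlr : 0 < l + r := by positivity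
      have hmr : 0 < m + r := by positivity
      rw [Real.log_div hlr.ne' hmr.ne']
    simpa using this
  have hint : IntegrableOn (fun r : ℝ => ((l+r)*(m+r))⁻¹) (Ioi 0) :=
    integrableOn_Ioi_deriv_of_nonneg' hderiv hpos htends
  have hval : ∫ r in Ioi (0:ℝ), ((l+r)*(m+r))⁻¹ = (Real.log l - Real.log m)/(l-m) := by
    have h := integral_Ioi_of_hasDerivAt_of_nonneg' hderiv hpos htends
    rw [h, add_zero, add_zero, show l-m = -(m-l) by ring, div_neg, zero_sub]
  rw [← ofReal_integral_eq_lintegral_ofReal hint, hval]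
  exact (ae_restrict_iff' measurableSet_Ioi).mpr (Filter.Eventually.of_forall hpos)

lemma gaussInt {c : ℝ} (hc : 0 < c) :
    ∫⁻ x : E2, ENNReal.ofReal (Real.exp (-(c * ‖x‖^2))) = ENNReal.ofReal (π / c) := by
  have hint : Integrable (fun x : E2 => Real.exp (-(c * ‖x‖^2))) := by
    have h := (GaussianFourier.integrable_cexp_neg_mul_sq_norm_add (V := E2)
      (b := (c:ℂ)) (by simpa using hc) 0 (0:E2)).norm
    apply h.congr
    apply Filter.Eventually.of_forall
    intro x
    simp only [Complex.norm_exp]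
    norm_num
    left
    norm_cast
  rw [← MeasureTheory.ofReal_integral_eq_lintegral_ofReal hint
    (Filter.Eventually.of_forall fun x => (Real.exp_pos _).le)]
  congr 1
  have := GaussianFourier.integral_rexp_neg_mul_sq_norm (V := E2) hc
  simp only [neg_mul] at this ⊢
  rw [this]
  have h2 : (Module.finrank ℝ E2 : ℝ) = 2 := by simp
  rw [h2]
  norm_num

end GreenAux

open GreenAux Set Real Filter Topology ENNReal in
/-- For `λ, μ > 0` with `λ ≠ μ`, `∫_{ℝ²} G_λ G_μ = (ln λ - ln μ) / (4π(λ - μ))`. -/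
theorem green_inner_product (lam mu : ℝ) (hlam : 0 < lam) (hmu : 0 < mu) (hne : lam ≠ mu) :
    ∫ x : E2, greenFn lam x * greenFn mu x
      = (Real.log lam - Real.log mu) / (4 * Real.pi * (lam - mu)) := by
  have pi_pos := Real.pi_pos
  -- notation
  set f : ℝ → E2 → ℝ → ℝ :=
    fun l x t => (4 * Real.pi * t)⁻¹ * Real.exp (-‖x‖ ^ 2 / (4 * t) - l * t) with hf
  set φ : ℝ → E2 → ℝ → ℝ≥0∞ := fun l x t => ENNReal.ofReal (f l x t) with hφ
  -- greenFn as toReal of lintegral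
  have hG : ∀ (l : ℝ) (x : E2), greenFn l x = (∫⁻ t in Ioi (0:ℝ), φ l x t).toReal := by
    intro l x
    rw [greenFn, integral_eq_lintegral_of_nonneg_ae]
    · apply (ae_restrict_iff' measurableSet_Ioi).mpr
      apply Filter.Eventually.of_forall
      intro t ht
      have ht' : (0:ℝ) < t := ht
      have : (0:ℝ) < 4 * Real.pi * t := by positivity
      exact mul_nonneg (inv_nonneg.mpr this.le) (Real.exp_pos _).le
    · apply Measurable.aestronglyMeasurable
      fun_prop
  set F : E2 → ℝ≥0∞ := fun x => ∫⁻ t in Ioi (0:ℝ), ∫⁻ s in Ioi (0:ℝ), φ lam x t * φ mu x s with hF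
  have hprod : ∀ x : E2, greenFn lam x * greenFn mu x = (F x).toReal := by
    intro x
    rw [hG lam x, hG mu x, ← ENNReal.toReal_mul]
    congr 1
    rw [hF]
    simp only
    calc (∫⁻ t in Ioi (0:ℝ), φ lam x t) * ∫⁻ s in Ioi (0:ℝ), φ mu x s
        = ∫⁻ t in Ioi (0:ℝ), φ lam x t * ∫⁻ s in Ioi (0:ℝ), φ mu x s := by
          rw [← lintegral_mul_const _ (by fun_prop)]
      _ = ∫⁻ t in Ioi (0:ℝ), ∫⁻ s in Ioi (0:ℝ), φ lam x t * φ mu x s := by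
          apply lintegral_congr
          intro t
          rw [← lintegral_const_mul' _ _ ENNReal.ofReal_ne_top]
  -- main computation
  have key : ∫⁻ x : E2, F x
      = ENNReal.ofReal ((Real.log lam - Real.log mu) / (4 * Real.pi * (lam - mu))) := by
    have h1 : Measurable (fun p : E2 × ℝ => ∫⁻ s in Ioi (0:ℝ), φ lam p.1 p.2 * φ mu p.1 s) :=
      Measurable.lintegral_prod_right'
        (f := fun q : (E2 × ℝ) × ℝ => φ lam q.1.1 q.1.2 * φ mu q.1.1 q.2) (by fun_prop)
    have swap_all : ∫⁻ x : E2, F x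
        = ∫⁻ t in Ioi (0:ℝ), ∫⁻ s in Ioi (0:ℝ), ∫⁻ x : E2, φ lam x t * φ mu x s := by
      rw [lintegral_lintegral_swap h1.aemeasurable]
      apply lintegral_congr
      intro t
      have hm : Measurable (fun p : E2 × ℝ => φ lam p.1 t * φ mu p.1 p.2) := by fun_prop
      exact lintegral_lintegral_swap hm.aemeasurable
    have gauss : ∀ t ∈ Ioi (0:ℝ), ∀ s ∈ Ioi (0:ℝ),
        ∫⁻ x : E2, φ lam x t * φ mu x s
          = ENNReal.ofReal ((4*Real.pi)⁻¹)
            * ENNReal.ofReal ((t+s)⁻¹ * Real.exp (-(lam*t) - mu*s)) := by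
      intro t ht s hs
      have ht' : (0:ℝ) < t := ht
      have hs' : (0:ℝ) < s := hs
      set c : ℝ := (t+s)/(4*(t*s)) with hc
      have hc' : 0 < c := by positivity
      set A : ℝ := (4*Real.pi*t)⁻¹ * (4*Real.pi*s)⁻¹ * Real.exp (-(lam*t) - mu*s) with hA
      have hA' : 0 ≤ A := by positivity
      have hpt : ∀ x : E2, φ lam x t * φ mu x s
          = ENNReal.ofReal A * ENNReal.ofReal (Real.exp (-(c * ‖x‖^2))) := by
        intro x
        rw [hφ]
        simp only
        rw [← ENNReal.ofReal_mul hA', ← ENNReal.ofReal_mul (by positivity)]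
        congr 1
        rw [hf, hA]
        simp only
        rw [show (4*Real.pi*t)⁻¹ * (4*Real.pi*s)⁻¹ * Real.exp (-(lam*t) - mu*s)
              * Real.exp (-(c * ‖x‖^2))
            = (4*Real.pi*t)⁻¹ * (4*Real.pi*s)⁻¹
              * (Real.exp (-(lam*t) - mu*s) * Real.exp (-(c * ‖x‖^2))) by ring,
          ← Real.exp_add,
          show ((4*Real.pi*t)⁻¹ * Real.exp (-‖x‖^2/(4*t) - lam*t))
              * ((4*Real.pi*s)⁻¹ * Real.exp (-‖x‖^2/(4*s) - mu*s))
            = (4*Real.pi*t)⁻¹ * (4*Real.pi*s)⁻¹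
              * (Real.exp (-‖x‖^2/(4*t) - lam*t) * Real.exp (-‖x‖^2/(4*s) - mu*s)) by ring,
          ← Real.exp_add]
        congr 1
        rw [hc]
        field_simp
        ring
      calc ∫⁻ x : E2, φ lam x t * φ mu x s
          = ∫⁻ x : E2, ENNReal.ofReal A * ENNReal.ofReal (Real.exp (-(c * ‖x‖^2))) := by
            exact lintegral_congr hpt
        _ = ENNReal.ofReal A * ENNReal.ofReal (Real.pi / c) := by
            rw [lintegral_const_mul' _ _ ENNReal.ofReal_ne_top, gaussInt hc']
        _ = ENNReal.ofReal (A * (Real.pi / c)) := by rw [← ENNReal.ofReal_mul hA']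
        _ = ENNReal.ofReal ((4*Real.pi)⁻¹ * ((t+s)⁻¹ * Real.exp (-(lam*t) - mu*s))) := by
            congr 1
            rw [hA, hc]
            have hts : (0:ℝ) < t + s := by positivity
            field_simp
        _ = ENNReal.ofReal ((4*Real.pi)⁻¹)
            * ENNReal.ofReal ((t+s)⁻¹ * Real.exp (-(lam*t) - mu*s)) := by
            rw [← ENNReal.ofReal_mul (by positivity)]
    have frullani : ∫⁻ t in Ioi (0:ℝ), ∫⁻ s in Ioi (0:ℝ),
        ENNReal.ofReal ((t+s)⁻¹ * Real.exp (-(lam*t) - mu*s))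
        = ENNReal.ofReal ((Real.log lam - Real.log mu)/(lam-mu)) := by
      have step_a : ∫⁻ t in Ioi (0:ℝ), ∫⁻ s in Ioi (0:ℝ),
          ENNReal.ofReal ((t+s)⁻¹ * Real.exp (-(lam*t) - mu*s))
          = ∫⁻ t in Ioi (0:ℝ), ∫⁻ s in Ioi (0:ℝ), ∫⁻ r in Ioi (0:ℝ),
            ENNReal.ofReal (Real.exp (-((lam+r)*t))) * ENNReal.ofReal (Real.exp (-((mu+r)*s))) := by
        apply setLIntegral_congr_fun measurableSet_Ioi
        intro t ht
        apply setLIntegral_congr_fun measurableSet_Ioi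
        intro s hs
        have ht' : (0:ℝ) < t := ht
        have hs' : (0:ℝ) < s := hs
        have hts : (0:ℝ) < t + s := by positivity
        calc ENNReal.ofReal ((t+s)⁻¹ * Real.exp (-(lam*t) - mu*s))
            = ENNReal.ofReal (Real.exp (-(lam*t) - mu*s)) * ENNReal.ofReal ((t+s)⁻¹) := by
              rw [← ENNReal.ofReal_mul (Real.exp_pos _).le, mul_comm]
          _ = ENNReal.ofReal (Real.exp (-(lam*t) - mu*s))
              * ∫⁻ r in Ioi (0:ℝ), ENNReal.ofReal (Real.exp (-((t+s)*r))) := by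
              rw [expIntL hts]
          _ = ∫⁻ r in Ioi (0:ℝ), ENNReal.ofReal (Real.exp (-(lam*t) - mu*s))
              * ENNReal.ofReal (Real.exp (-((t+s)*r))) := by
              rw [lintegral_const_mul' _ _ ENNReal.ofReal_ne_top]
          _ = ∫⁻ r in Ioi (0:ℝ), ENNReal.ofReal (Real.exp (-((lam+r)*t)))
              * ENNReal.ofReal (Real.exp (-((mu+r)*s))) := by
              apply lintegral_congr
              intro r
              rw [← ENNReal.ofReal_mul (Real.exp_pos _).le,
                ← ENNReal.ofReal_mul (Real.exp_pos _).le, ← Real.exp_add, ← Real.exp_add]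
              congr 1
              ring
      have step_b : ∫⁻ t in Ioi (0:ℝ), ∫⁻ s in Ioi (0:ℝ), ∫⁻ r in Ioi (0:ℝ),
            ENNReal.ofReal (Real.exp (-((lam+r)*t))) * ENNReal.ofReal (Real.exp (-((mu+r)*s)))
          = ∫⁻ r in Ioi (0:ℝ), ∫⁻ t in Ioi (0:ℝ), ∫⁻ s in Ioi (0:ℝ),
            ENNReal.ofReal (Real.exp (-((lam+r)*t))) * ENNReal.ofReal (Real.exp (-((mu+r)*s))) := by
        have e1 : ∫⁻ t in Ioi (0:ℝ), ∫⁻ s in Ioi (0:ℝ), ∫⁻ r in Ioi (0:ℝ),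
              ENNReal.ofReal (Real.exp (-((lam+r)*t))) * ENNReal.ofReal (Real.exp (-((mu+r)*s)))
            = ∫⁻ t in Ioi (0:ℝ), ∫⁻ r in Ioi (0:ℝ), ∫⁻ s in Ioi (0:ℝ),
              ENNReal.ofReal (Real.exp (-((lam+r)*t))) * ENNReal.ofReal (Real.exp (-((mu+r)*s))) := by
          apply lintegral_congr
          intro t
          have hm : Measurable (fun p : ℝ × ℝ =>
              ENNReal.ofReal (Real.exp (-((lam+p.2)*t))) * ENNReal.ofReal (Real.exp (-((mu+p.2)*p.1)))) := by
            fun_prop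
          exact lintegral_lintegral_swap hm.aemeasurable
        rw [e1]
        have hm2 : Measurable (fun p : ℝ × ℝ => ∫⁻ s in Ioi (0:ℝ),
            ENNReal.ofReal (Real.exp (-((lam+p.2)*p.1))) * ENNReal.ofReal (Real.exp (-((mu+p.2)*s)))) :=
          Measurable.lintegral_prod_right'
            (f := fun q : (ℝ × ℝ) × ℝ =>
              ENNReal.ofReal (Real.exp (-((lam+q.1.2)*q.1.1))) * ENNReal.ofReal (Real.exp (-((mu+q.1.2)*q.2))))
            (by fun_prop)
        exact lintegral_lintegral_swap hm2.aemeasurable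
      have step_d : ∫⁻ r in Ioi (0:ℝ), ∫⁻ t in Ioi (0:ℝ), ∫⁻ s in Ioi (0:ℝ),
            ENNReal.ofReal (Real.exp (-((lam+r)*t))) * ENNReal.ofReal (Real.exp (-((mu+r)*s)))
          = ∫⁻ r in Ioi (0:ℝ), ENNReal.ofReal (((lam+r)*(mu+r))⁻¹) := by
        apply setLIntegral_congr_fun measurableSet_Ioi
        intro r hr
        have hr' : (0:ℝ) < r := hr
        have hlr : (0:ℝ) < lam + r := by positivity
        have hmr : (0:ℝ) < mu + r := by positivity
        calc ∫⁻ t in Ioi (0:ℝ), ∫⁻ s in Ioi (0:ℝ),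
              ENNReal.ofReal (Real.exp (-((lam+r)*t))) * ENNReal.ofReal (Real.exp (-((mu+r)*s)))
            = ∫⁻ t in Ioi (0:ℝ),
              ENNReal.ofReal (Real.exp (-((lam+r)*t))) * ENNReal.ofReal ((mu+r)⁻¹) := by
              apply lintegral_congr
              intro t
              rw [lintegral_const_mul' _ _ ENNReal.ofReal_ne_top, expIntL hmr]
          _ = ENNReal.ofReal ((lam+r)⁻¹) * ENNReal.ofReal ((mu+r)⁻¹) := by
              rw [lintegral_mul_const' _ _ ENNReal.ofReal_ne_top, expIntL hlr]
          _ = ENNReal.ofReal (((lam+r)*(mu+r))⁻¹) := by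
              rw [← ENNReal.ofReal_mul (by positivity), mul_inv]
      rw [step_a, step_b, step_d, fracIntL hlam hmu hne]
    calc ∫⁻ x : E2, F x
        = ∫⁻ t in Ioi (0:ℝ), ∫⁻ s in Ioi (0:ℝ), ENNReal.ofReal ((4*Real.pi)⁻¹)
            * ENNReal.ofReal ((t+s)⁻¹ * Real.exp (-(lam*t) - mu*s)) := by
          rw [swap_all]
          apply setLIntegral_congr_fun measurableSet_Ioi
          intro t ht
          apply setLIntegral_congr_fun measurableSet_Ioi
          intro s hs
          exact gauss t ht s hs
      _ = ENNReal.ofReal ((4*Real.pi)⁻¹)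
          * ∫⁻ t in Ioi (0:ℝ), ∫⁻ s in Ioi (0:ℝ),
            ENNReal.ofReal ((t+s)⁻¹ * Real.exp (-(lam*t) - mu*s)) := by
          simp_rw [lintegral_const_mul' _ _ ENNReal.ofReal_ne_top]
      _ = ENNReal.ofReal ((4*Real.pi)⁻¹)
          * ENNReal.ofReal ((Real.log lam - Real.log mu)/(lam-mu)) := by rw [frullani]
      _ = ENNReal.ofReal ((Real.log lam - Real.log mu) / (4 * Real.pi * (lam - mu))) := by
          rw [← ENNReal.ofReal_mul (by positivity)]
          congr 1
          have h1 : lam - mu ≠ 0 := sub_ne_zero.mpr hne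
          field_simp
  have hFmeas : Measurable F := by
    have h1 : Measurable (fun p : E2 × ℝ => ∫⁻ s in Ioi (0:ℝ), φ lam p.1 p.2 * φ mu p.1 s) :=
      Measurable.lintegral_prod_right'
        (f := fun q : (E2 × ℝ) × ℝ => φ lam q.1.1 q.1.2 * φ mu q.1.1 q.2) (by fun_prop)
    exact Measurable.lintegral_prod_right'
      (f := fun p : E2 × ℝ => ∫⁻ s in Ioi (0:ℝ), φ lam p.1 p.2 * φ mu p.1 s) h1
  have hFlt : ∀ᵐ x : E2, F x < ⊤ := by
    apply ae_lt_top hFmeas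
    rw [key]
    exact ENNReal.ofReal_ne_top
  have hnn : 0 ≤ (Real.log lam - Real.log mu) / (4 * Real.pi * (lam - mu)) := by
    rcases lt_or_gt_of_ne hne with h | h
    · apply div_nonneg_iff.mpr
      right
      constructor
      · simpa using (Real.log_lt_log hlam h).le
      · nlinarith
    · apply div_nonneg
      · simpa using (Real.log_lt_log hmu h).le
      · nlinarith
  calc ∫ x : E2, greenFn lam x * greenFn mu x = ∫ x : E2, (F x).toReal := by
        simp_rw [hprod]
    _ = (∫⁻ x : E2, F x).toReal := integral_toReal hFmeas.aemeasurable hFlt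
    _ = (Real.log lam - Real.log mu) / (4 * Real.pi * (lam - mu)) := by
        rw [key, ENNReal.toReal_ofReal hnn]

end
end

section
/- For every λ > 0, G_λ is a distributional fundamental solution of −Δ + λ on ℝ²: for every Schwartz function φ : ℝ² → ℂ, ∫_{ℝ²} G_λ(x) (−Δφ(x) + λ φ(x)) dx = φ(0). -/
open MeasureTheory Real Set SchwartzMap
open scoped FourierTransform RealInnerProductSpace

noncomputable section

/-- The Laplacian `Δf(x) = ∑ᵢ ∂²f/∂xᵢ²(x)` of a function on ℝ². -/
noncomputable def lapl {F : Type*} [NormedAddCommGroup F] [NormedSpace ℝ F]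
    (f : E2 → F) (x : E2) : F :=
  ∑ i : Fin 2, fderiv ℝ (fun y => fderiv ℝ f y (EuclideanSpace.single i 1)) x
    (EuclideanSpace.single i 1)

lemma finrank_E2 : Module.finrank ℝ E2 = 2 := by simp

lemma gauss_ft {t : ℝ} (ht : 0 < t) (x : E2) :
    𝓕 (fun ξ : E2 => Complex.exp (-((4 * Real.pi ^ 2 * t : ℝ) : ℂ) * ‖ξ‖ ^ 2)) x
      = ((4 * Real.pi * t)⁻¹ : ℝ) * Complex.exp ((-(‖x‖ ^ 2 / (4 * t)) : ℝ) : ℂ) := by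
  have hb : (0:ℝ) < 4 * Real.pi ^ 2 * t := by positivity
  have hb' : (0:ℝ) < (((4 * Real.pi ^ 2 * t : ℝ) : ℂ)).re := by
    rw [Complex.ofReal_re]; exact hb
  have hπ : (Real.pi : ℂ) ≠ 0 := by exact_mod_cast Real.pi_ne_zero
  have ht' : (t : ℂ) ≠ 0 := by exact_mod_cast ht.ne'
  have h := fourier_gaussian_innerProductSpace
    (b := ((4 * Real.pi ^ 2 * t : ℝ) : ℂ)) hb' x
  rw [h, finrank_E2]
  have h1 : ((2 : ℕ) / 2 : ℂ) = 1 := by norm_num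
  rw [h1, Complex.cpow_one]
  congr 1
  · push_cast
    field_simp
  · congr 1
    push_cast
    field_simp

lemma t_integral {b : ℝ} (hb : 0 < b) :
    ∫ t in Set.Ioi (0 : ℝ), Complex.exp ((-(b * t) : ℝ) : ℂ) = ((b⁻¹ : ℝ) : ℂ) := by
  have h0 : ∫ t in Set.Ioi (0:ℝ), Real.exp (-(b * t)) = b⁻¹ := by
    have h := integral_comp_mul_left_Ioi (fun x => Real.exp (-x)) 0 hb
    simp only [mul_zero, integral_exp_neg_Ioi, neg_zero, Real.exp_zero, smul_eq_mul,
      mul_one] at h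
    rw [h]
  rw [← h0]
  simp_rw [← Complex.ofReal_exp]
  exact integral_ofReal

lemma mult_formula {t : ℝ} (ht : 0 < t) {f : E2 → ℂ} (hf : Integrable f) :
    ∫ x : E2, (((4 * Real.pi * t)⁻¹ * Real.exp (-(‖x‖ ^ 2 / (4 * t))) : ℝ) : ℂ) * f x
      = ∫ ξ : E2, Complex.exp (-((4 * Real.pi ^ 2 * t : ℝ) : ℂ) * ‖ξ‖ ^ 2) * 𝓕 f ξ := by
  have hb' : (0:ℝ) < (((4 * Real.pi ^ 2 * t : ℝ) : ℂ)).re := by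
    rw [Complex.ofReal_re]; positivity
  have hG : Integrable (fun v : E2 => Complex.exp (-((4 * Real.pi ^ 2 * t : ℝ) : ℂ) * ‖v‖ ^ 2)) := by
    simpa using GaussianFourier.integrable_cexp_neg_mul_sq_norm_add hb' 0 (0 : E2)
  have h := VectorFourier.integral_fourierIntegral_smul_eq_flip (L := innerₗ E2)
    Real.continuous_fourierChar continuous_inner hG hf
  simp only [flip_innerₗ, smul_eq_mul] at h
  calc ∫ x : E2, (((4 * Real.pi * t)⁻¹ * Real.exp (-(‖x‖ ^ 2 / (4 * t))) : ℝ) : ℂ) * f x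
      = ∫ x : E2, (𝓕 (fun ξ : E2 => Complex.exp (-((4 * Real.pi ^ 2 * t : ℝ) : ℂ) * ‖ξ‖ ^ 2)) x) * f x := by
        congr 1; ext x
        rw [gauss_ft ht x]
        push_cast
        ring
    _ = ∫ ξ : E2, Complex.exp (-((4 * Real.pi ^ 2 * t : ℝ) : ℂ) * ‖ξ‖ ^ 2) * 𝓕 f ξ := h

lemma integrable_fderiv_schwartz (g : SchwartzMap E2 ℂ) : Integrable (fderiv ℝ ⇑g) := by
  have h : (fderiv ℝ ⇑g) = ⇑(SchwartzMap.fderivCLM ℝ E2 ℂ g) := by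
    funext x; rw [SchwartzMap.fderivCLM_apply]
  rw [h]
  exact (SchwartzMap.fderivCLM ℝ E2 ℂ g).integrable

lemma ft_dir_deriv (g : SchwartzMap E2 ℂ) (v : E2) (ξ : E2) :
    𝓕 (fun x => fderiv ℝ (⇑g) x v) ξ
      = (2 * Real.pi * Complex.I * (⟪ξ, v⟫ : ℝ)) * 𝓕 (⇑g) ξ := by
  have hfd := integrable_fderiv_schwartz g
  calc 𝓕 (fun x => fderiv ℝ (⇑g) x v) ξ = 𝓕 (fderiv ℝ ⇑g) ξ v :=
        (Real.fourier_continuousLinearMap_apply hfd).symm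
    _ = VectorFourier.fourierSMulRight (-innerSL ℝ) (𝓕 ⇑g) ξ v := by
        rw [Real.fourier_fderiv g.integrable g.differentiable hfd]
    _ = _ := by
        simp only [VectorFourier.fourierSMulRight_apply, ContinuousLinearMap.neg_apply, innerSL_apply_apply]
        rw [Complex.real_smul]
        simp only [smul_eq_mul]
        push_cast
        rw [show ((innerSL ℝ) ξ) v = ⟪ξ, v⟫ from rfl]
        ring

def Dg (i : Fin 2) (g : SchwartzMap E2 ℂ) : SchwartzMap E2 ℂ :=
  SchwartzMap.evalCLM ℝ E2 ℂ (EuclideanSpace.single i (1:ℝ) : E2) (SchwartzMap.fderivCLM ℝ E2 ℂ g)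

lemma Dg_coe (i : Fin 2) (g : SchwartzMap E2 ℂ) :
    ⇑(Dg i g) = fun x => fderiv ℝ (⇑g) x (EuclideanSpace.single i 1) := by
  funext x
  show (SchwartzMap.fderivCLM ℝ E2 ℂ g) x (EuclideanSpace.single i 1) = _
  rw [SchwartzMap.fderivCLM_apply]

lemma lapl_eq (g : SchwartzMap E2 ℂ) :
    (fun x => lapl (⇑g) x) = ⇑(Dg 0 (Dg 0 g)) + ⇑(Dg 1 (Dg 1 g)) := by
  funext x
  simp [lapl, Fin.sum_univ_two, Dg_coe]

lemma ft_Dg (g : SchwartzMap E2 ℂ) (i : Fin 2) (ξ : E2) :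
    𝓕 (⇑(Dg i g)) ξ = (2 * Real.pi * Complex.I * ((ξ i : ℝ) : ℂ)) * 𝓕 (⇑g) ξ := by
  rw [Dg_coe, ft_dir_deriv]
  congr
  simp [PiLp.inner_apply]

lemma norm_sq_E2 (ξ : E2) : (ξ 0) ^ 2 + (ξ 1) ^ 2 = ‖ξ‖ ^ 2 := by
  rw [EuclideanSpace.norm_eq, Real.sq_sqrt (by positivity)]
  simp [Fin.sum_univ_two]

lemma ft_lapl (g : SchwartzMap E2 ℂ) (ξ : E2) :
    𝓕 (fun x => lapl (⇑g) x) ξ = ((-(4 * Real.pi ^ 2) * ‖ξ‖ ^ 2 : ℝ) : ℂ) * 𝓕 (⇑g) ξ := by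
  rw [lapl_eq]
  have hadd := VectorFourier.fourierIntegral_add (L := innerₗ E2) Real.continuous_fourierChar continuous_inner
      ((Dg 0 (Dg 0 g)).integrable (μ := volume)) ((Dg 1 (Dg 1 g)).integrable (μ := volume))
  have h : 𝓕 (⇑(Dg 0 (Dg 0 g)) + ⇑(Dg 1 (Dg 1 g))) ξ
      = 𝓕 (⇑(Dg 0 (Dg 0 g))) ξ + 𝓕 (⇑(Dg 1 (Dg 1 g))) ξ := by
    exact congrFun hadd ξ
  rw [h, ft_Dg, ft_Dg, ft_Dg, ft_Dg, ← norm_sq_E2]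
  push_cast
  ring_nf
  rw [Complex.I_sq]
  ring

lemma integrable_rexp_gauss {b : ℝ} (hb : 0 < b) :
    Integrable (fun v : E2 => Real.exp (-b * ‖v‖ ^ 2)) := by
  have h := (GaussianFourier.integrable_cexp_neg_mul_sq_norm_add (b := (b : ℂ))
    (by simpa) 0 (0 : E2)).norm
  refine h.congr (Filter.Eventually.of_forall fun v => ?_)
  simp [Complex.norm_exp]
  rw [← Complex.ofReal_pow, Complex.ofReal_re]
  exact Or.inl rfl

lemma integral_rexp_gauss_E2 {b : ℝ} (hb : 0 < b) :
    ∫ v : E2, Real.exp (-b * ‖v‖ ^ 2) = Real.pi / b := by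
  rw [GaussianFourier.integral_rexp_neg_mul_sq_norm hb]
  norm_num

lemma key (lam : ℝ) (hlam : 0 < lam) (ψ : SchwartzMap E2 ℂ) :
    ∫ x : E2, (greenFn lam x : ℂ) * ψ x
      = ∫ ξ : E2, (((lam + 4 * Real.pi ^ 2 * ‖ξ‖ ^ 2 : ℝ)⁻¹ : ℝ) : ℂ) * 𝓕 (⇑ψ) ξ := by
  set Ψ : SchwartzMap E2 ℂ := SchwartzMap.fourierTransformCLM ℂ ψ with hΨdef
  have hΨ : 𝓕 (⇑ψ) = ⇑Ψ := rfl
  obtain ⟨C, hC⟩ := ψ.decay' 0 0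
  have hC' : ∀ x : E2, ‖ψ x‖ ≤ C := by
    intro x; have := hC x; exact (by simpa using this : ‖ψ.toFun x‖ ≤ C)
  have hC0 : 0 ≤ C := le_trans (norm_nonneg _) (hC' 0)
  set F : ℝ → E2 → ℂ := fun t x =>
    (((4 * Real.pi * t)⁻¹ * Real.exp (-‖x‖ ^ 2 / (4 * t) - lam * t) : ℝ) : ℂ) * ψ x with hF
  set G : ℝ → E2 → ℂ := fun t ξ =>
    ((Real.exp (-(lam * t)) : ℝ) : ℂ) *
      (Complex.exp (-((4 * Real.pi ^ 2 * t : ℝ) : ℂ) * ‖ξ‖ ^ 2) * Ψ ξ) with hG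
  -- step A
  have stepA : ∀ x : E2, (greenFn lam x : ℂ) * ψ x = ∫ t in Set.Ioi (0:ℝ), F t x := by
    intro x
    have h0 : ((greenFn lam x : ℝ) : ℂ)
        = ∫ t in Set.Ioi (0:ℝ), (((4 * Real.pi * t)⁻¹ *
            Real.exp (-‖x‖ ^ 2 / (4 * t) - lam * t) : ℝ) : ℂ) := by
      rw [greenFn]; exact integral_ofReal.symm
    rw [h0, ← integral_mul_const]
  -- measurability of uncurry F
  have hFmeas : AEStronglyMeasurable (Function.uncurry F)
      ((volume.restrict (Set.Ioi (0:ℝ))).prod volume) := by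
    apply Measurable.aestronglyMeasurable
    apply Measurable.mul
    · apply Complex.measurable_ofReal.comp
      apply Measurable.mul
      · exact ((measurable_const.mul measurable_fst).inv)
      · exact (Measurable.neg ((measurable_norm.comp measurable_snd).pow measurable_const)
          |>.div (measurable_const.mul measurable_fst) |>.sub
          (measurable_const.mul measurable_fst)).exp
    · exact ψ.continuous.measurable.comp measurable_snd
  -- norm identity
  have hFnorm : ∀ t ∈ Set.Ioi (0:ℝ), ∀ x : E2,
      ‖F t x‖ = (4 * Real.pi * t)⁻¹ * Real.exp (-‖x‖ ^ 2 / (4 * t) - lam * t) * ‖ψ x‖ := by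
    intro t ht x
    have ht' : (0:ℝ) < t := ht
    rw [hF]
    rw [norm_mul, Complex.norm_real, Real.norm_eq_abs, abs_of_nonneg (by positivity)]
  -- sections integrable
  have hFsec : ∀ t ∈ Set.Ioi (0:ℝ), Integrable (fun x => F t x) := by
    intro t ht
    have ht' : (0:ℝ) < t := ht
    apply (ψ.integrable (μ := volume)).bdd_mul (c := (4 * Real.pi * t)⁻¹)
    · apply Continuous.aestronglyMeasurable
      fun_prop
    · refine Filter.Eventually.of_forall (fun x => ?_)
      rw [Complex.norm_real, Real.norm_eq_abs, abs_of_nonneg (by positivity)]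
      have h1 : Real.exp (-‖x‖ ^ 2 / (4 * t) - lam * t) ≤ 1 := by
        apply Real.exp_le_one_iff.2
        have h4 : 0 ≤ ‖x‖ ^ 2 / (4 * t) := by positivity
        have h5 : -‖x‖ ^ 2 / (4 * t) = -(‖x‖ ^ 2 / (4 * t)) := by ring
        have h6 : 0 < lam * t := mul_pos hlam ht'
        rw [h5]; linarith
      have h2 : (0:ℝ) ≤ (4 * Real.pi * t)⁻¹ := by positivity
      calc (4 * Real.pi * t)⁻¹ * Real.exp (-‖x‖ ^ 2 / (4 * t) - lam * t)
          ≤ (4 * Real.pi * t)⁻¹ * 1 := by gcongr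
        _ = (4 * Real.pi * t)⁻¹ := mul_one _
  -- integral of norms bounded
  have hFbound : ∀ t ∈ Set.Ioi (0:ℝ),
      (∫ x : E2, ‖F t x‖) ≤ C * Real.exp (-(lam * t)) := by
    intro t ht
    have ht' : (0:ℝ) < t := ht
    have h4t : (0:ℝ) < (4*t)⁻¹ := by positivity
    have hmaj : Integrable (fun x : E2 =>
        ((4 * Real.pi * t)⁻¹ * Real.exp (-(lam * t)) * C) * Real.exp (-(4*t)⁻¹ * ‖x‖ ^ 2)) :=
      (integrable_rexp_gauss h4t).const_mul _
    have hle : ∀ x : E2, ‖F t x‖ ≤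
        ((4 * Real.pi * t)⁻¹ * Real.exp (-(lam * t)) * C) * Real.exp (-(4*t)⁻¹ * ‖x‖ ^ 2) := by
      intro x
      rw [hFnorm t ht x]
      have : -‖x‖ ^ 2 / (4 * t) - lam * t = (-(lam * t)) + (-(4*t)⁻¹ * ‖x‖ ^ 2) := by
        field_simp; ring
      rw [this, Real.exp_add]
      calc (4 * Real.pi * t)⁻¹ * (Real.exp (-(lam * t)) * Real.exp (-(4*t)⁻¹ * ‖x‖ ^ 2)) * ‖ψ x‖
          ≤ (4 * Real.pi * t)⁻¹ * (Real.exp (-(lam * t)) * Real.exp (-(4*t)⁻¹ * ‖x‖ ^ 2)) * C := by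
            have : (0:ℝ) ≤ (4 * Real.pi * t)⁻¹ *
              (Real.exp (-(lam * t)) * Real.exp (-(4*t)⁻¹ * ‖x‖ ^ 2)) := by positivity
            exact mul_le_mul_of_nonneg_left (hC' x) this
        _ = _ := by ring
    calc (∫ x : E2, ‖F t x‖)
        ≤ ∫ x : E2, ((4 * Real.pi * t)⁻¹ * Real.exp (-(lam * t)) * C) *
            Real.exp (-(4*t)⁻¹ * ‖x‖ ^ 2) := by
          apply integral_mono_of_nonneg
          · exact Filter.Eventually.of_forall fun x => norm_nonneg _
          · exact hmaj
          · exact Filter.Eventually.of_forall hle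
      _ = ((4 * Real.pi * t)⁻¹ * Real.exp (-(lam * t)) * C) * (Real.pi / (4*t)⁻¹) := by
          rw [integral_const_mul, integral_rexp_gauss_E2 h4t]
      _ = C * Real.exp (-(lam * t)) := by
          field_simp
  -- F integrable on product
  have hFint : Integrable (Function.uncurry F)
      ((volume.restrict (Set.Ioi (0:ℝ))).prod volume) := by
    rw [integrable_prod_iff hFmeas]
    constructor
    · filter_upwards [ae_restrict_mem measurableSet_Ioi] with t ht
      exact hFsec t ht
    · apply Integrable.mono' (g := fun t => C * Real.exp (-(lam * t)))
      · simpa [neg_mul] using (exp_neg_integrableOn_Ioi 0 hlam).const_mul C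
      · exact hFmeas.norm.integral_prod_right'
      · filter_upwards [ae_restrict_mem measurableSet_Ioi] with t ht
        rw [Real.norm_eq_abs, abs_of_nonneg (integral_nonneg fun x => norm_nonneg _)]
        exact hFbound t ht
  -- step C: swap
  have stepC : ∫ x : E2, (greenFn lam x : ℂ) * ψ x
      = ∫ t in Set.Ioi (0:ℝ), ∫ x : E2, F t x := by
    rw [show (fun x : E2 => (greenFn lam x : ℂ) * ψ x)
        = fun x => ∫ t in Set.Ioi (0:ℝ), F t x from funext stepA]
    exact (integral_integral_swap hFint).symm
  -- step D
  have stepD : ∀ t ∈ Set.Ioi (0:ℝ), (∫ x : E2, F t x) = ∫ ξ : E2, G t ξ := by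
    intro t ht
    have ht' : (0:ℝ) < t := ht
    have hsplit : ∀ x : E2, F t x
        = ((Real.exp (-(lam * t)) : ℝ) : ℂ) *
          ((((4 * Real.pi * t)⁻¹ * Real.exp (-(‖x‖ ^ 2 / (4 * t))) : ℝ) : ℂ) * ψ x) := by
      intro x
      rw [hF]
      beta_reduce
      have he : -‖x‖ ^ 2 / (4 * t) - lam * t = (-(‖x‖ ^ 2 / (4 * t))) + (-(lam * t)) := by ring
      rw [he, Real.exp_add]
      push_cast
      ring
    calc (∫ x : E2, F t x)
        = ∫ x : E2, ((Real.exp (-(lam * t)) : ℝ) : ℂ) *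
            ((((4 * Real.pi * t)⁻¹ * Real.exp (-(‖x‖ ^ 2 / (4 * t))) : ℝ) : ℂ) * ψ x) := by
          simp only [hsplit]
      _ = ((Real.exp (-(lam * t)) : ℝ) : ℂ) * ∫ x : E2,
            (((4 * Real.pi * t)⁻¹ * Real.exp (-(‖x‖ ^ 2 / (4 * t))) : ℝ) : ℂ) * ψ x :=
          integral_const_mul _ _
      _ = ((Real.exp (-(lam * t)) : ℝ) : ℂ) * ∫ ξ : E2,
            Complex.exp (-((4 * Real.pi ^ 2 * t : ℝ) : ℂ) * ‖ξ‖ ^ 2) * 𝓕 (⇑ψ) ξ := by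
          rw [mult_formula ht' (ψ.integrable (μ := volume))]
      _ = ∫ ξ : E2, G t ξ := by
          rw [hΨ, integral_const_mul]
  -- gaussian exponent as real cast
  have hgauss_cast : ∀ (t : ℝ) (ξ : E2),
      -((4 * Real.pi ^ 2 * t : ℝ) : ℂ) * ‖ξ‖ ^ 2
        = ((-(4 * Real.pi ^ 2 * t * ‖ξ‖ ^ 2) : ℝ) : ℂ) := by
    intro t ξ
    push_cast
    ring
  -- G measurable
  have hGmeas : AEStronglyMeasurable (Function.uncurry G)
      ((volume.restrict (Set.Ioi (0:ℝ))).prod volume) := by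
    apply Continuous.aestronglyMeasurable
    apply Continuous.mul
    · exact Complex.continuous_ofReal.comp ((continuous_const.mul continuous_fst).neg.rexp)
    · apply Continuous.mul
      · apply Complex.continuous_exp.comp
        apply Continuous.mul
        · exact (Complex.continuous_ofReal.comp (continuous_const.mul continuous_fst)).neg
        · fun_prop
      · exact Ψ.continuous.comp continuous_snd
  -- G sections integrable
  have hGsec : ∀ t ∈ Set.Ioi (0:ℝ), Integrable (fun ξ => G t ξ) := by
    intro t ht
    have ht' : (0:ℝ) < t := ht
    apply Integrable.const_mul
    apply (Ψ.integrable (μ := volume)).bdd_mul (c := 1)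
    · exact (Complex.continuous_exp.comp (by fun_prop)).aestronglyMeasurable
    · refine Filter.Eventually.of_forall (fun ξ => ?_)
      rw [hgauss_cast t ξ, ← Complex.ofReal_exp, Complex.norm_real, Real.norm_eq_abs,
        abs_of_pos (Real.exp_pos _)]
      apply Real.exp_le_one_iff.2
      have : (0:ℝ) ≤ 4 * Real.pi ^ 2 * t * ‖ξ‖ ^ 2 := by positivity
      linarith
  -- G integrable on product
  have hGint : Integrable (Function.uncurry G)
      ((volume.restrict (Set.Ioi (0:ℝ))).prod volume) := by
    rw [integrable_prod_iff hGmeas]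
    constructor
    · filter_upwards [ae_restrict_mem measurableSet_Ioi] with t ht
      exact hGsec t ht
    · apply Integrable.mono' (g := fun t => (∫ ξ : E2, ‖Ψ ξ‖) * Real.exp (-(lam * t)))
      · simpa [neg_mul] using (exp_neg_integrableOn_Ioi 0 hlam).const_mul (∫ ξ : E2, ‖Ψ ξ‖)
      · exact hGmeas.norm.integral_prod_right'
      · filter_upwards [ae_restrict_mem measurableSet_Ioi] with t ht
        rw [Real.norm_eq_abs, abs_of_nonneg (integral_nonneg fun ξ => norm_nonneg _)]
        have hle : ∀ ξ : E2, ‖G t ξ‖ ≤ Real.exp (-(lam * t)) * ‖Ψ ξ‖ := by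
          intro ξ
          rw [hG]
          simp only [norm_mul, Complex.norm_real, Real.norm_eq_abs,
            abs_of_pos (Real.exp_pos _)]
          rw [hgauss_cast t ξ, ← Complex.ofReal_exp, Complex.norm_real, Real.norm_eq_abs,
            abs_of_pos (Real.exp_pos _)]
          have h1 : Real.exp (-(4 * Real.pi ^ 2 * t * ‖ξ‖ ^ 2)) ≤ 1 := by
            apply Real.exp_le_one_iff.2
            have ht' : (0:ℝ) < t := ht
            have : (0:ℝ) ≤ 4 * Real.pi ^ 2 * t * ‖ξ‖ ^ 2 := by positivity
            linarith
          have h2 : (0:ℝ) ≤ Real.exp (-(lam * t)) := (Real.exp_pos _).le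
          calc Real.exp (-(lam * t)) * (Real.exp (-(4 * Real.pi ^ 2 * t * ‖ξ‖ ^ 2)) * ‖Ψ ξ‖)
              ≤ Real.exp (-(lam * t)) * (1 * ‖Ψ ξ‖) := by
                have := norm_nonneg (Ψ ξ); gcongr
            _ = Real.exp (-(lam * t)) * ‖Ψ ξ‖ := by ring
        calc (∫ ξ : E2, ‖G t ξ‖)
            ≤ ∫ ξ : E2, Real.exp (-(lam * t)) * ‖Ψ ξ‖ := by
              apply integral_mono_of_nonneg
              · exact Filter.Eventually.of_forall fun ξ => norm_nonneg _
              · exact (Ψ.integrable (μ := volume)).norm.const_mul _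
              · exact Filter.Eventually.of_forall hle
          _ = Real.exp (-(lam * t)) * ∫ ξ : E2, ‖Ψ ξ‖ := integral_const_mul _ _
          _ = (∫ ξ : E2, ‖Ψ ξ‖) * Real.exp (-(lam * t)) := mul_comm _ _
  -- step F
  have stepF : ∀ ξ : E2, (∫ t in Set.Ioi (0:ℝ), G t ξ)
      = (((lam + 4 * Real.pi ^ 2 * ‖ξ‖ ^ 2 : ℝ)⁻¹ : ℝ) : ℂ) * Ψ ξ := by
    intro ξ
    have hb : (0:ℝ) < lam + 4 * Real.pi ^ 2 * ‖ξ‖ ^ 2 := by positivity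
    have hcomb : ∀ t : ℝ, G t ξ
        = Complex.exp ((-((lam + 4 * Real.pi ^ 2 * ‖ξ‖ ^ 2) * t) : ℝ) : ℂ) * Ψ ξ := by
      intro t
      rw [hG]
      beta_reduce
      rw [Complex.ofReal_exp, ← mul_assoc, ← Complex.exp_add]
      congr 2
      push_cast
      ring
    simp only [hcomb]
    rw [integral_mul_const, t_integral hb]
  -- conclude
  rw [stepC, setIntegral_congr_fun measurableSet_Ioi stepD, integral_integral_swap hGint]
  simp only [stepF]
  rw [hΨ]


def psiS (lam : ℝ) (φ : SchwartzMap E2 ℂ) : SchwartzMap E2 ℂ :=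
  (lam : ℂ) • φ - (Dg 0 (Dg 0 φ) + Dg 1 (Dg 1 φ))

lemma psiS_coe (lam : ℝ) (φ : SchwartzMap E2 ℂ) :
    ⇑(psiS lam φ) = (lam : ℂ) • ⇑φ + (-1 : ℂ) • (fun x => lapl (⇑φ) x) := by
  funext x
  simp only [psiS, SchwartzMap.sub_apply, SchwartzMap.add_apply, SchwartzMap.smul_apply,
    Pi.add_apply, Pi.smul_apply, smul_eq_mul, lapl_eq φ]
  ring

lemma psiS_apply (lam : ℝ) (φ : SchwartzMap E2 ℂ) (x : E2) :
    psiS lam φ x = -(lapl (fun y => φ y) x) + (lam : ℂ) * φ x := by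
  have h := congrFun (psiS_coe lam φ) x
  simp only [Pi.add_apply, Pi.smul_apply, smul_eq_mul] at h
  rw [h]
  ring_nf

lemma ft_psiS (lam : ℝ) (φ : SchwartzMap E2 ℂ) (ξ : E2) :
    𝓕 (⇑(psiS lam φ)) ξ = (((lam + 4 * Real.pi ^ 2 * ‖ξ‖ ^ 2 : ℝ)) : ℂ) * 𝓕 (⇑φ) ξ := by
  rw [psiS_coe]
  have hlap_int : Integrable (fun x => lapl (⇑φ) x) := by
    rw [lapl_eq]
    exact ((Dg 0 (Dg 0 φ)).integrable (μ := volume)).add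
      ((Dg 1 (Dg 1 φ)).integrable (μ := volume))
  have h1 := VectorFourier.fourierIntegral_add (L := innerₗ E2) Real.continuous_fourierChar
    continuous_inner ((φ.integrable (μ := volume)).smul ((lam : ℂ)))
    (hlap_int.smul ((-1 : ℂ)))
  have h2 := congrFun h1 ξ
  rw [show 𝓕 ((lam : ℂ) • ⇑φ + (-1 : ℂ) • (fun x => lapl (⇑φ) x)) ξ
      = 𝓕 ((lam : ℂ) • ⇑φ) ξ + 𝓕 ((-1 : ℂ) • (fun x => lapl (⇑φ) x)) ξ from h2]
  rw [show 𝓕 ((lam : ℂ) • ⇑φ) = (lam : ℂ) • 𝓕 ⇑φ from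
    VectorFourier.fourierIntegral_const_smul _ _ _ _ _]
  rw [show 𝓕 ((-1 : ℂ) • (fun x => lapl (⇑φ) x)) = (-1 : ℂ) • 𝓕 (fun x => lapl (⇑φ) x) from
    VectorFourier.fourierIntegral_const_smul _ _ _ _ _]
  simp only [Pi.smul_apply, smul_eq_mul]
  rw [ft_lapl φ ξ]
  push_cast
  ring

/-- For `λ > 0`, `G_λ` is a distributional fundamental solution of `-Δ + λ` on ℝ²:
for every Schwartz function `φ`, `∫ G_λ(x)(-Δφ(x) + λφ(x)) dx = φ(0)`. -/
theorem green_fundamental_solution (lam : ℝ) (hlam : 0 < lam) (φ : SchwartzMap E2 ℂ) :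
    ∫ x : E2, (greenFn lam x : ℂ) * (-(lapl (fun y => φ y) x) + (lam : ℂ) * φ x) = φ 0 := by
  have hint : Integrable (𝓕 ⇑φ) :=
    (SchwartzMap.fourierTransformCLM ℂ φ).integrable (μ := volume)
  calc ∫ x : E2, (greenFn lam x : ℂ) * (-(lapl (fun y => φ y) x) + (lam : ℂ) * φ x)
      = ∫ x : E2, (greenFn lam x : ℂ) * psiS lam φ x := by
        simp_rw [psiS_apply]
    _ = ∫ ξ : E2, (((lam + 4 * Real.pi ^ 2 * ‖ξ‖ ^ 2 : ℝ)⁻¹ : ℝ) : ℂ) * 𝓕 (⇑(psiS lam φ)) ξ :=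
        key lam hlam (psiS lam φ)
    _ = ∫ ξ : E2, 𝓕 (⇑φ) ξ := by
        congr 1
        funext ξ
        rw [ft_psiS, ← mul_assoc, ← Complex.ofReal_mul,
          inv_mul_cancel₀ (by positivity : (lam + 4 * Real.pi ^ 2 * ‖ξ‖ ^ 2 : ℝ) ≠ 0),
          Complex.ofReal_one, one_mul]
    _ = φ 0 := by
        have h2 := Continuous.fourierInv_fourier_eq φ.continuous (φ.integrable (μ := volume)) hint
        have h3 : 𝓕⁻ (𝓕 ⇑φ) 0 = ∫ ξ : E2, 𝓕 (⇑φ) ξ := by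
          rw [Real.fourierInv_eq]
          simp
        rw [← h3, h2]

end
end

section
/- For every λ > 0 there exist constants 0 < C₁ ≤ C₂ such that for every x ∈ ℝ² with ‖x‖ ≥ 1, C₁ ‖x‖^{-1/2} e^{−√λ ‖x‖} ≤ G_λ(x) ≤ C₂ ‖x‖^{-1/2} e^{−√λ ‖x‖}. -/
open MeasureTheory

noncomputable section

lemma sinh_le_mul_exp {x : ℝ} (hx : 0 ≤ x) : Real.sinh x ≤ x * Real.exp x := by
  rw [Real.sinh_eq, Real.exp_neg]
  have ha := Real.exp_pos x
  have h1 : (-(2*x)) + 1 ≤ Real.exp (-(2*x)) := Real.add_one_le_exp _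
  have h2 : Real.exp (-(2*x)) = (Real.exp x)⁻¹ * (Real.exp x)⁻¹ := by
    rw [show -(2*x) = -x + -x by ring, Real.exp_add, Real.exp_neg]
  rw [h2] at h1
  have hinv : Real.exp x * (Real.exp x)⁻¹ = 1 := mul_inv_cancel₀ ha.ne'
  nlinarith [mul_le_mul_of_nonneg_left h1 ha.le]

lemma cosh_lb (v : ℝ) : 1 + 2 * v ^ 2 ≤ Real.cosh (2 * v) := by
  have h1 := Real.cosh_two_mul v
  have h2 := Real.cosh_sq v
  have h3 : |v| ≤ Real.sinh |v| := Real.self_le_sinh_iff.mpr (abs_nonneg v)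
  have h4 : v ^ 2 ≤ Real.sinh v ^ 2 := by
    rw [← sq_abs v, ← sq_abs (Real.sinh v), Real.abs_sinh]
    exact pow_le_pow_left₀ (abs_nonneg v) h3 2
  nlinarith

lemma cosh_ub {v : ℝ} (hv : |v| ≤ 1) : Real.cosh (2 * v) ≤ 1 + 18 * v ^ 2 := by
  have h1 := Real.cosh_two_mul v
  have h2 := Real.cosh_sq v
  have h3 : Real.sinh |v| ≤ |v| * Real.exp |v| := sinh_le_mul_exp (abs_nonneg v)
  have h4 : Real.exp |v| ≤ 3 := by
    calc Real.exp |v| ≤ Real.exp 1 := Real.exp_le_exp.mpr hv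
    _ ≤ 3 := by linarith [Real.exp_one_lt_d9]
  have h5 : Real.sinh v ^ 2 ≤ 9 * v ^ 2 := by
    rw [← sq_abs (Real.sinh v), Real.abs_sinh]
    have h6 : Real.sinh |v| ≤ 3 * |v| := by nlinarith [abs_nonneg v]
    have h7 : (0:ℝ) ≤ Real.sinh |v| := Real.sinh_nonneg_iff.mpr (abs_nonneg v)
    calc Real.sinh |v| ^ 2 ≤ (3*|v|)^2 := pow_le_pow_left₀ h7 h6 2
    _ = 9 * v ^ 2 := by rw [mul_pow, sq_abs]; ring
  nlinarith

lemma green_cov {lam r : ℝ} (hlam : 0 < lam) (hr : 0 < r) :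
    (∫ t in Set.Ioi (0:ℝ), (4 * Real.pi * t)⁻¹ * Real.exp (-r ^ 2 / (4 * t) - lam * t))
      = (2 * Real.pi)⁻¹ * ∫ v : ℝ, Real.exp (-(Real.sqrt lam * r) * Real.cosh (2 * v)) := by
  set s := Real.sqrt lam with hsdef
  have hs : 0 < s := Real.sqrt_pos.mpr hlam
  have hss : s * s = lam := Real.mul_self_sqrt hlam.le
  set c := r / (2 * s) with hcdef
  have hc : 0 < c := by positivity
  set f : ℝ → ℝ := fun v => c * Real.exp (2 * v) with hf
  set f' : ℝ → ℝ := fun v => c * (Real.exp (2 * v) * 2) with hf'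
  have hderiv : ∀ v ∈ (Set.univ : Set ℝ), HasDerivWithinAt f (f' v) Set.univ v := by
    intro v _
    have h1 : HasDerivAt (fun v : ℝ => 2 * v) 2 v := by
      simpa using (hasDerivAt_id v).const_mul 2
    have h2 : HasDerivAt (fun v : ℝ => Real.exp (2 * v)) (Real.exp (2 * v) * 2) v :=
      (Real.hasDerivAt_exp (2 * v)).comp v h1
    exact (h2.const_mul c).hasDerivWithinAt
  have hmono : StrictMono f := fun a b hab => by
    exact mul_lt_mul_of_pos_left (Real.exp_lt_exp.mpr (by linarith)) hc
  have hinj : Set.InjOn f Set.univ := hmono.injective.injOn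
  have himg : f '' Set.univ = Set.Ioi (0:ℝ) := by
    ext t
    simp only [Set.image_univ, Set.mem_range, Set.mem_Ioi]
    constructor
    · rintro ⟨v, rfl⟩; positivity
    · intro ht
      refine ⟨Real.log (t / c) / 2, ?_⟩
      simp only [hf]
      rw [show 2 * (Real.log (t / c) / 2) = Real.log (t / c) by ring,
        Real.exp_log (div_pos ht hc)]
      field_simp
  have key := integral_image_eq_integral_abs_deriv_smul MeasurableSet.univ hderiv hinj
    (fun t => (4 * Real.pi * t)⁻¹ * Real.exp (-r ^ 2 / (4 * t) - lam * t))
  rw [himg, setIntegral_univ] at key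
  rw [key, ← MeasureTheory.integral_const_mul]
  congr 1
  ext v
  have hE := Real.exp_pos (2 * v)
  have habs : |f' v| = c * (Real.exp (2 * v) * 2) := by
    rw [abs_of_pos]; positivity
  rw [smul_eq_mul, habs]
  have hexp : -r ^ 2 / (4 * f v) - lam * f v = -(s * r) * Real.cosh (2 * v) := by
    rw [Real.cosh_eq, Real.exp_neg, hf]
    simp only
    rw [hcdef, ← hss]
    field_simp
    ring
  rw [hexp]
  have hfv : (4 * Real.pi * f v)⁻¹ = (4 * Real.pi * (c * Real.exp (2*v)))⁻¹ := rfl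
  rw [hfv]
  have hpi := Real.pi_pos
  field_simp
  ring

/-- For `λ > 0`, `G_λ(x) ≍ ‖x‖^{-1/2} e^{-√λ ‖x‖}` for `‖x‖ ≥ 1`: there are constants
`0 < C₁ ≤ C₂` with `C₁‖x‖^{-1/2} e^{-√λ‖x‖} ≤ G_λ(x) ≤ C₂‖x‖^{-1/2} e^{-√λ‖x‖}`. -/
theorem green_exponential_decay (lam : ℝ) (hlam : 0 < lam) :
    ∃ C₁ C₂ : ℝ, 0 < C₁ ∧ C₁ ≤ C₂ ∧ ∀ x : E2, 1 ≤ ‖x‖ →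
      C₁ * ‖x‖ ^ (-(1 / 2) : ℝ) * Real.exp (-Real.sqrt lam * ‖x‖) ≤ greenFn lam x ∧
      greenFn lam x ≤ C₂ * ‖x‖ ^ (-(1 / 2) : ℝ) * Real.exp (-Real.sqrt lam * ‖x‖) := by
  set s := Real.sqrt lam with hsdef
  have hs : 0 < s := Real.sqrt_pos.mpr hlam
  have hpi := Real.pi_pos
  set C₂ : ℝ := (2 * Real.pi)⁻¹ * Real.sqrt (Real.pi / (2 * s)) with hC2def
  set Craw : ℝ := Real.pi⁻¹ * Real.exp (-(18 * s)) with hCrawdef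
  have hC2 : 0 < C₂ := by positivity
  have hCraw : 0 < Craw := by positivity
  refine ⟨min Craw C₂, C₂, lt_min hCraw hC2, min_le_right _ _, ?_⟩
  intro x hx
  set r := ‖x‖ with hrdef
  have hr : 0 < r := lt_of_lt_of_le one_pos hx
  have hsr : 0 < s * r := by positivity
  -- the transformed integral
  set I : ℝ := ∫ v : ℝ, Real.exp (-(s * r) * Real.cosh (2 * v)) with hIdef
  have hG : greenFn lam x = (2 * Real.pi)⁻¹ * I := green_cov hlam hr
  -- rpow
  have hrpow : r ^ (-(1/2) : ℝ) = (Real.sqrt r)⁻¹ := by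
    rw [Real.rpow_neg hr.le, Real.sqrt_eq_rpow]
  have hsqrtr : 1 ≤ Real.sqrt r := by
    rw [show (1:ℝ) = Real.sqrt 1 by simp]
    exact Real.sqrt_le_sqrt hx
  -- integrability via Gaussian domination
  have hbound : ∀ v : ℝ, Real.exp (-(s * r) * Real.cosh (2 * v))
      ≤ Real.exp (-(s * r)) * Real.exp (-(2 * (s * r)) * v ^ 2) := by
    intro v
    rw [← Real.exp_add]
    apply Real.exp_le_exp.mpr
    have := cosh_lb v
    nlinarith
  have hgauss : Integrable (fun v : ℝ => Real.exp (-(s * r))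
      * Real.exp (-(2 * (s * r)) * v ^ 2)) :=
    (integrable_exp_neg_mul_sq (by positivity)).const_mul _
  have hcont : Continuous (fun v : ℝ => Real.exp (-(s * r) * Real.cosh (2 * v))) := by
    fun_prop
  have hInt : Integrable (fun v : ℝ => Real.exp (-(s * r) * Real.cosh (2 * v))) := by
    refine hgauss.mono' hcont.aestronglyMeasurable (Filter.Eventually.of_forall fun v => ?_)
    rw [Real.norm_eq_abs, abs_of_pos (Real.exp_pos _)]
    exact hbound v
  constructor
  · -- lower bound
    set u : ℝ := (Real.sqrt r)⁻¹ with hudef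
    have hu0 : 0 < u := by positivity
    have hu1 : u ≤ 1 := by
      rw [hudef]
      exact inv_le_one_of_one_le₀ hsqrtr
    have hu2 : u ^ 2 = r⁻¹ := by
      rw [hudef, inv_pow, Real.sq_sqrt hr.le]
    have hru : r * u ^ 2 = 1 := by
      rw [hu2]; field_simp
    have hconst : ∀ v ∈ Set.Icc (-u) u,
        Real.exp (-(s * r)) * Real.exp (-(18 * s)) ≤ Real.exp (-(s * r) * Real.cosh (2 * v)) := by
      intro v hv
      rw [← Real.exp_add]
      apply Real.exp_le_exp.mpr
      have hvabs : |v| ≤ u := abs_le.mpr ⟨hv.1, hv.2⟩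
      have hcosh : Real.cosh (2 * v) ≤ 1 + 18 * v ^ 2 := cosh_ub (hvabs.trans hu1)
      have hv2 : v ^ 2 ≤ u ^ 2 := by
        rw [← sq_abs v]
        exact pow_le_pow_left₀ (abs_nonneg v) hvabs 2
      nlinarith [mul_le_mul_of_nonneg_left hv2 (le_of_lt hsr),
        mul_le_mul_of_nonneg_left hcosh (le_of_lt hsr)]
    have hA : (volume (Set.Icc (-u) u)).toReal = 2 * u := by
      rw [Real.volume_Icc, ENNReal.toReal_ofReal (by linarith)]
      ring
    have hlow : (Real.exp (-(s * r)) * Real.exp (-(18 * s))) * (2 * u)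
        ≤ ∫ v in Set.Icc (-u) u, Real.exp (-(s * r) * Real.cosh (2 * v)) := by
      have := setIntegral_ge_of_const_le_real (measurableSet_Icc)
        (by exact (measure_Icc_lt_top).ne) hconst hInt.integrableOn
      rwa [measureReal_def, hA] at this
    have hsetle : (∫ v in Set.Icc (-u) u, Real.exp (-(s * r) * Real.cosh (2 * v))) ≤ I :=
      setIntegral_le_integral hInt (Filter.Eventually.of_forall fun v => (Real.exp_pos _).le)
    have hI : (Real.exp (-(s * r)) * Real.exp (-(18 * s))) * (2 * u) ≤ I :=
      hlow.trans hsetle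
    rw [hG, hrpow]
    have hexp : Real.exp (-s * r) = Real.exp (-(s * r)) := by ring_nf
    rw [hexp]
    calc min Craw C₂ * (Real.sqrt r)⁻¹ * Real.exp (-(s * r))
        ≤ Craw * (Real.sqrt r)⁻¹ * Real.exp (-(s * r)) := by
          gcongr
          exact min_le_left _ _
      _ = (2 * Real.pi)⁻¹ * ((Real.exp (-(s * r)) * Real.exp (-(18 * s))) * (2 * u)) := by
          rw [hCrawdef, hudef]
          field_simp
      _ ≤ (2 * Real.pi)⁻¹ * I := by gcongr
  · -- upper bound
    have hIle : I ≤ Real.exp (-(s * r)) * Real.sqrt (Real.pi / (2 * (s * r))) := by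
      have h1 : I ≤ ∫ v : ℝ, Real.exp (-(s * r)) * Real.exp (-(2 * (s * r)) * v ^ 2) := by
        refine integral_mono_of_nonneg (Filter.Eventually.of_forall fun v => (Real.exp_pos _).le)
          hgauss (Filter.Eventually.of_forall hbound)
      rwa [MeasureTheory.integral_const_mul, integral_gaussian] at h1
    have hsqrtsplit : Real.sqrt (Real.pi / (2 * (s * r)))
        = Real.sqrt (Real.pi / (2 * s)) * (Real.sqrt r)⁻¹ := by
      rw [show Real.pi / (2 * (s * r)) = (Real.pi / (2 * s)) * r⁻¹ by rw [← div_div, div_div, mul_comm]; ring_nf,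
        Real.sqrt_mul (by positivity), Real.sqrt_inv]
    rw [hG, hrpow]
    have hexp : Real.exp (-s * r) = Real.exp (-(s * r)) := by ring_nf
    rw [hexp]
    calc (2 * Real.pi)⁻¹ * I
        ≤ (2 * Real.pi)⁻¹ * (Real.exp (-(s * r)) * Real.sqrt (Real.pi / (2 * (s * r)))) :=
          mul_le_mul_of_nonneg_left hIle (by positivity)
      _ = C₂ * (Real.sqrt r)⁻¹ * Real.exp (-(s * r)) := by
          rw [hsqrtsplit, hC2def]; ring

end
end

section
/- For every real-valued Schwartz function f on ℝ², the Pohozaev-type identity ∫_{ℝ²} (−Δf(x) + f(x)) (x·∇f(x)) dx = −∫_{ℝ²} f(x)² dx holds. -/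
open MeasureTheory
open SchwartzMap

noncomputable section

noncomputable def ee (i : Fin 2) : E2 := EuclideanSpace.single i 1

noncomputable def pderivCLM (_k : Type) (m : E2) : SchwartzMap E2 ℝ →L[ℝ] SchwartzMap E2 ℝ :=
  SchwartzMap.evalCLM ℝ E2 ℝ m ∘L SchwartzMap.fderivCLM ℝ E2 ℝ

lemma pderivCLM_apply (_k : Type) (m : E2) (f : SchwartzMap E2 ℝ) (x : E2) :
    pderivCLM _k m f x = fderiv ℝ f x m := rfl

lemma schwartz_tg (g : SchwartzMap E2 ℝ) : Function.HasTemperateGrowth (g : E2 → ℝ) := by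
  refine ⟨g.smooth ⊤, fun n => ?_⟩
  obtain ⟨C, _, hC⟩ := g.decay 0 n
  exact ⟨0, C, fun x => by simpa using hC x⟩

lemma coord_tg (j : Fin 2) : Function.HasTemperateGrowth (fun x : E2 => x j) :=
  (EuclideanSpace.proj j : E2 →L[ℝ] ℝ).hasTemperateGrowth

noncomputable def pmul (u w : SchwartzMap E2 ℝ) : SchwartzMap E2 ℝ :=
  SchwartzMap.bilinLeftCLM (ContinuousLinearMap.mul ℝ ℝ) (schwartz_tg w) u

lemma pmul_apply (u w : SchwartzMap E2 ℝ) (x : E2) : pmul u w x = u x * w x := rfl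

noncomputable def cmul (j : Fin 2) (u : SchwartzMap E2 ℝ) : SchwartzMap E2 ℝ :=
  SchwartzMap.bilinLeftCLM (ContinuousLinearMap.mul ℝ ℝ) (coord_tg j) u

lemma integrable_coord_mul (j : Fin 2) (u : SchwartzMap E2 ℝ) :
    Integrable (fun x : E2 => x j * u x) :=
  (cmul j u).integrable.congr (Filter.Eventually.of_forall fun x => mul_comm _ _)

lemma coord_diff (j : Fin 2) : Differentiable ℝ (fun x : E2 => x j) :=
  (EuclideanSpace.proj j : E2 →L[ℝ] ℝ).differentiable

lemma fderiv_coord (j : Fin 2) (x : E2) :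
    fderiv ℝ (fun x : E2 => x j) x = (EuclideanSpace.proj j : E2 →L[ℝ] ℝ) :=
  (EuclideanSpace.proj j : E2 →L[ℝ] ℝ).fderiv

lemma proj_single (i j : Fin 2) :
    (EuclideanSpace.proj j : E2 →L[ℝ] ℝ) (ee i) = if j = i then 1 else 0 := by
  simp [ee, EuclideanSpace.single_apply]

/-- Basic IBP with coordinate weight: `∫ xⱼ ∂ⱼh = -∫ h` for Schwartz `h`. -/
lemma ibp_coord (h : SchwartzMap E2 ℝ) (j : Fin 2) :
    ∫ x : E2, x j * fderiv ℝ (⇑h) x (ee j) = -∫ x : E2, h x := by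
  have h1 : Integrable (fun x : E2 => fderiv ℝ (fun x : E2 => x j) x (ee j) * h x) := by
    apply h.integrable.congr (Filter.Eventually.of_forall fun x => ?_)
    rw [fderiv_coord, proj_single]
    simp
  have key := integral_mul_fderiv_eq_neg_fderiv_mul_of_integrable (μ := volume)
    (f := fun x : E2 => x j) (g := ⇑h) (v := ee j) h1
    ((integrable_coord_mul j (pderivCLM ℝ (ee j) h)).congr
      (Filter.Eventually.of_forall fun x => by simp [pderivCLM_apply]))
    (integrable_coord_mul j h) (fun x _ => coord_diff j x) (fun x _ => h.differentiable x)
  rw [key]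
  congr 1
  apply integral_congr_ae (Filter.Eventually.of_forall fun x => ?_)
  rw [fderiv_coord, proj_single]
  simp

/-- `∫ xⱼ g ∂ⱼg = -(1/2) ∫ g²`. -/
lemma ibp_half_sq (g : SchwartzMap E2 ℝ) (j : Fin 2) :
    ∫ x : E2, x j * (g x * fderiv ℝ (⇑g) x (ee j)) = -(1/2) * ∫ x : E2, g x * g x := by
  have hsq : ⇑(pmul g g) = fun y : E2 => g y * g y := funext fun y => pmul_apply g g y
  have hkey := ibp_coord (pmul g g) j
  have hd : ∀ x : E2, fderiv ℝ (⇑(pmul g g)) x (ee j)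
      = 2 * (g x * fderiv ℝ (⇑g) x (ee j)) := by
    intro x
    rw [hsq, fderiv_fun_mul g.differentiable.differentiableAt g.differentiable.differentiableAt]
    simp only [ContinuousLinearMap.add_apply, ContinuousLinearMap.coe_smul', Pi.smul_apply,
      smul_eq_mul]
    ring
  have h2 : (fun x : E2 => x j * fderiv ℝ (⇑(pmul g g)) x (ee j))
      = fun x : E2 => 2 * (x j * (g x * fderiv ℝ (⇑g) x (ee j))) := by
    funext x; rw [hd]; ring
  rw [h2] at hkey
  rw [integral_const_mul] at hkey
  have hgg : ∫ x : E2, (pmul g g) x = ∫ x : E2, g x * g x := by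
    apply integral_congr_ae (Filter.Eventually.of_forall fun x => pmul_apply g g x)
  rw [hgg] at hkey
  linarith

/-- IBP for `∫ (∂ᵢu)(xⱼ w)`. -/
lemma ibp2 (u w : SchwartzMap E2 ℝ) (i j : Fin 2) :
    ∫ x : E2, fderiv ℝ (⇑u) x (ee i) * (x j * w x)
      = -((if j = i then (1:ℝ) else 0) * ∫ x : E2, u x * w x)
        - ∫ x : E2, x j * (u x * fderiv ℝ (⇑w) x (ee i)) := by
  set G : E2 → ℝ := fun x => x j * w x with hG
  have hGdiff : Differentiable ℝ G := (coord_diff j).mul w.differentiable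
  have hDG : ∀ x : E2, fderiv ℝ G x (ee i)
      = (if j = i then (1:ℝ) else 0) * w x + x j * fderiv ℝ (⇑w) x (ee i) := by
    intro x
    rw [hG, fderiv_fun_mul (coord_diff j).differentiableAt w.differentiable.differentiableAt]
    simp only [ContinuousLinearMap.add_apply, ContinuousLinearMap.coe_smul', Pi.smul_apply,
      smul_eq_mul]
    rw [fderiv_coord, proj_single]
    ring
  have hint_uw : Integrable (fun x : E2 => u x * w x) := (pmul u w).integrable
  have hint_cuw : Integrable (fun x : E2 => x j * (u x * w x)) := integrable_coord_mul j (pmul u w)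
  have hint_cuDw : Integrable (fun x : E2 => x j * (u x * fderiv ℝ (⇑w) x (ee i))) := by
    apply (integrable_coord_mul j (pmul u (pderivCLM ℝ (ee i) w))).congr
      (Filter.Eventually.of_forall fun x => ?_)
    simp [pmul_apply, pderivCLM_apply]
  have h1 : Integrable (fun x : E2 => fderiv ℝ (⇑u) x (ee i) * G x) := by
    apply (integrable_coord_mul j (pmul (pderivCLM ℝ (ee i) u) w)).congr
      (Filter.Eventually.of_forall fun x => ?_)
    simp only [pmul_apply, pderivCLM_apply, hG]
    ring
  have h2 : Integrable (fun x : E2 => u x * fderiv ℝ G x (ee i)) := by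
    apply ((hint_uw.const_mul (if j = i then (1:ℝ) else 0)).add hint_cuDw).congr
      (Filter.Eventually.of_forall fun x => ?_)
    simp only [hDG, Pi.add_apply]
    ring
  have h3 : Integrable (fun x : E2 => u x * G x) := by
    apply hint_cuw.congr (Filter.Eventually.of_forall fun x => ?_)
    simp only [hG]; ring
  have key := integral_mul_fderiv_eq_neg_fderiv_mul_of_integrable (μ := volume)
    (f := ⇑u) (g := G) (v := ee i) h1 h2 h3 (fun x _ => u.differentiable x) (fun x _ => hGdiff x)
  have key2 : ∫ x : E2, fderiv ℝ (⇑u) x (ee i) * G x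
      = -∫ x : E2, u x * fderiv ℝ G x (ee i) := by linarith [key]
  have hsplit : ∫ x : E2, u x * fderiv ℝ G x (ee i)
      = (if j = i then (1:ℝ) else 0) * (∫ x : E2, u x * w x)
        + ∫ x : E2, x j * (u x * fderiv ℝ (⇑w) x (ee i)) := by
    rw [← integral_const_mul, ← integral_add (hint_uw.const_mul _) hint_cuDw]
    apply integral_congr_ae (Filter.Eventually.of_forall fun x => ?_)
    simp only [hDG]; ring
  rw [key2, hsplit]
  ring

lemma fderiv_dir_dir (f : SchwartzMap E2 ℝ) (v : E2) (x : E2) (w : E2) :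
    fderiv ℝ (fun y : E2 => fderiv ℝ (⇑f) y v) x w = fderiv ℝ (fderiv ℝ (⇑f)) x w v := by
  have hc : DifferentiableAt ℝ (fderiv ℝ (⇑f)) x := by
    have h1 : ContDiff ℝ 1 (fderiv ℝ (⇑f)) :=
      (f.smooth ⊤).fderiv_right (WithTop.coe_le_coe.mpr (le_top : ((1:ℕ∞) + 1) ≤ ⊤))
    exact (h1.differentiable one_ne_zero) x
  rw [fderiv_clm_apply hc (differentiableAt_const v)]
  simp

lemma mixed_symm (f : SchwartzMap E2 ℝ) (i j : Fin 2) (x : E2) :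
    fderiv ℝ (⇑(pderivCLM ℝ (ee j) f)) x (ee i) = fderiv ℝ (⇑(pderivCLM ℝ (ee i) f)) x (ee j) := by
  have hp : ∀ v : E2, ⇑(pderivCLM ℝ v f) = fun y : E2 => fderiv ℝ (⇑f) y v :=
    fun v => funext fun y => pderivCLM_apply ℝ v f y
  rw [hp, hp, fderiv_dir_dir, fderiv_dir_dir]
  exact ((f.smooth ⊤).contDiffAt.isSymmSndFDerivAt
    (by rw [minSmoothness_of_isRCLikeNormedField]; exact WithTop.coe_le_coe.mpr (le_top : (2:ℕ∞) ≤ ⊤))).eq _ _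

/-- Pohozaev-type identity: for every real-valued Schwartz function `f` on ℝ²,
`∫ (-Δf(x) + f(x)) (x·∇f(x)) dx = -∫ f(x)² dx`, where `x·∇f(x)` is the dilation derivative. -/
theorem pohozaev_identity (f : SchwartzMap E2 ℝ) :
    ∫ x : E2, (-(lapl (fun y => f y) x) + f x) * fderiv ℝ (fun y => f y) x x
      = -∫ x : E2, f x ^ 2 := by
  set F0 := pderivCLM ℝ (ee 0) f with hF0def
  set F1 := pderivCLM ℝ (ee 1) f with hF1def
  have hF0 : ∀ x : E2, F0 x = fderiv ℝ (⇑f) x (ee 0) := fun x => pderivCLM_apply ℝ _ f x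
  have hF1 : ∀ x : E2, F1 x = fderiv ℝ (⇑f) x (ee 1) := fun x => pderivCLM_apply ℝ _ f x
  have hlapl : ∀ x : E2, lapl (⇑f) x
      = fderiv ℝ (⇑F0) x (ee 0) + fderiv ℝ (⇑F1) x (ee 1) := by
    intro x
    have e0 : (fun y : E2 => fderiv ℝ (⇑f) y (EuclideanSpace.single 0 1)) = ⇑F0 :=
      funext fun y => (pderivCLM_apply ℝ _ f y).symm
    have e1 : (fun y : E2 => fderiv ℝ (⇑f) y (EuclideanSpace.single 1 1)) = ⇑F1 :=
      funext fun y => (pderivCLM_apply ℝ _ f y).symm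
    rw [lapl, Fin.sum_univ_two, e0, e1]
    rfl
  have hdil : ∀ x : E2, fderiv ℝ (⇑f) x x = x 0 * F0 x + x 1 * F1 x := by
    intro x
    have hx : (x 0) • ee 0 + (x 1) • ee 1 = x := by
      ext i
      fin_cases i <;>
        simp [ee, EuclideanSpace.single_apply]
    calc fderiv ℝ (⇑f) x x = fderiv ℝ (⇑f) x ((x 0) • ee 0 + (x 1) • ee 1) := by rw [hx]
      _ = x 0 * F0 x + x 1 * F1 x := by
          rw [(fderiv ℝ (⇑f) x).map_add, (fderiv ℝ (⇑f) x).map_smul, (fderiv ℝ (⇑f) x).map_smul]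
          simp only [smul_eq_mul, hF0, hF1]
  have hI : (fun x : E2 => (-(lapl (⇑f) x) + f x) * fderiv ℝ (⇑f) x x)
      = fun x : E2 =>
        (x 0 * (f x * fderiv ℝ (⇑f) x (ee 0)) + x 1 * (f x * fderiv ℝ (⇑f) x (ee 1)))
        - fderiv ℝ (⇑F0) x (ee 0) * (x 0 * F0 x)
        - fderiv ℝ (⇑F0) x (ee 0) * (x 1 * F1 x)
        - fderiv ℝ (⇑F1) x (ee 1) * (x 0 * F0 x)
        - fderiv ℝ (⇑F1) x (ee 1) * (x 1 * F1 x) := by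
    funext x
    rw [hlapl, hdil, ← hF0, ← hF1]
    ring
  -- integrability of the pieces
  have intA : ∀ j : Fin 2, Integrable
      (fun x : E2 => x j * (f x * fderiv ℝ (⇑f) x (ee j))) := by
    intro j
    apply (integrable_coord_mul j (pmul f (pderivCLM ℝ (ee j) f))).congr
      (Filter.Eventually.of_forall fun x => ?_)
    simp [pmul_apply, pderivCLM_apply]
  have intU : ∀ (u w : SchwartzMap E2 ℝ) (i j : Fin 2), Integrable
      (fun x : E2 => fderiv ℝ (⇑u) x (ee i) * (x j * w x)) := by
    intro u w i j
    apply (integrable_coord_mul j (pmul (pderivCLM ℝ (ee i) u) w)).congr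
      (Filter.Eventually.of_forall fun x => ?_)
    simp only [pmul_apply, pderivCLM_apply]
    ring
  have intA0 := intA 0
  have intA1 := intA 1
  have intU00 := intU F0 F0 0 0
  have intU01 := intU F0 F1 0 1
  have intU10 := intU F1 F0 1 0
  have intU11 := intU F1 F1 1 1
  have iab : Integrable (fun x : E2 =>
      x 0 * (f x * fderiv ℝ (⇑f) x (ee 0)) + x 1 * (f x * fderiv ℝ (⇑f) x (ee 1))) :=
    intA0.add intA1
  have i1 : Integrable (fun x : E2 =>
      x 0 * (f x * fderiv ℝ (⇑f) x (ee 0)) + x 1 * (f x * fderiv ℝ (⇑f) x (ee 1))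
        - fderiv ℝ (⇑F0) x (ee 0) * (x 0 * F0 x)) := iab.sub intU00
  have i2 : Integrable (fun x : E2 =>
      x 0 * (f x * fderiv ℝ (⇑f) x (ee 0)) + x 1 * (f x * fderiv ℝ (⇑f) x (ee 1))
        - fderiv ℝ (⇑F0) x (ee 0) * (x 0 * F0 x)
        - fderiv ℝ (⇑F0) x (ee 0) * (x 1 * F1 x)) := i1.sub intU01
  have i3 : Integrable (fun x : E2 =>
      x 0 * (f x * fderiv ℝ (⇑f) x (ee 0)) + x 1 * (f x * fderiv ℝ (⇑f) x (ee 1))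
        - fderiv ℝ (⇑F0) x (ee 0) * (x 0 * F0 x)
        - fderiv ℝ (⇑F0) x (ee 0) * (x 1 * F1 x)
        - fderiv ℝ (⇑F1) x (ee 1) * (x 0 * F0 x)) := i2.sub intU10
  rw [hI]
  rw [integral_sub i3 intU11, integral_sub i2 intU10, integral_sub i1 intU01,
    integral_sub iab intU00, integral_add intA0 intA1]
  -- values of the A-integrals
  have vA0 := ibp_half_sq f 0
  have vA1 := ibp_half_sq f 1
  -- values of the U-integrals
  have cross : ∀ (i j : Fin 2),
      ∫ x : E2, x j * ((pderivCLM ℝ (ee i) f) x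
        * fderiv ℝ (⇑(pderivCLM ℝ (ee j) f)) x (ee i))
      = -(1/2) * ∫ x : E2, (pderivCLM ℝ (ee i) f) x * (pderivCLM ℝ (ee i) f) x := by
    intro i j
    rw [show (fun x : E2 => x j * ((pderivCLM ℝ (ee i) f) x
        * fderiv ℝ (⇑(pderivCLM ℝ (ee j) f)) x (ee i)))
      = fun x : E2 => x j * ((pderivCLM ℝ (ee i) f) x
        * fderiv ℝ (⇑(pderivCLM ℝ (ee i) f)) x (ee j))
      from funext fun x => by rw [mixed_symm f i j x]]
    exact ibp_half_sq (pderivCLM ℝ (ee i) f) j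
  have vU00 := ibp2 F0 F0 0 0
  have vU01 := ibp2 F0 F1 0 1
  have vU10 := ibp2 F1 F0 1 0
  have vU11 := ibp2 F1 F1 1 1
  rw [cross 0 0] at vU00
  rw [cross 0 1] at vU01
  rw [cross 1 0] at vU10
  rw [cross 1 1] at vU11
  simp only [show ((0:Fin 2) = 0) = True from by simp, show ((1:Fin 2) = 0) = False from by simp,
    show ((0:Fin 2) = 1) = False from by simp, show ((1:Fin 2) = 1) = True from by simp,
    if_true, if_false, one_mul, zero_mul, neg_zero, zero_sub] at vU00 vU01 vU10 vU11
  have hpow : ∫ x : E2, f x ^ 2 = ∫ x : E2, f x * f x := by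
    apply integral_congr_ae (Filter.Eventually.of_forall fun x => ?_)
    rw [pow_two]
  rw [hpow]
  linarith [vA0, vA1, vU00, vU01, vU10, vU11]

end
end
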